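/- Let t, u in K with u ≠ -3. Then the set {(a,b,c) in K^3 : a*b*c = a + b + c, -3*(a^2+b^2+c^2) = t, -3*(a*b+a*c+b*c) = u} is finite and has at most 12 elements. -/
import Mathlib

open Polynomial

/-- The fiber over `(t,u)` with `u ≠ -3` of the map
`(a,b,c) ↦ (-3(a²+b²+c²), -3(ab+ac+bc))` on the slice `W = {abc = a+b+c}` is finite with at
most 12 elements. -/
theorem stmt12 {K : Type*} [Field K] (hchar2 : (2 : K) ≠ 0) (hchar3 : (3 : K) ≠ 0)
    (t u : K) (hu : u ≠ -3) :
    {p : K × K × K | p.1 * p.2.1 * p.2.2 = p.1 + p.2.1 + p.2.2 ∧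
        -3*(p.1^2 + p.2.1^2 + p.2.2^2) = t ∧
        -3*(p.1*p.2.1 + p.1*p.2.2 + p.2.1*p.2.2) = u}.Finite ∧
    {p : K × K × K | p.1 * p.2.1 * p.2.2 = p.1 + p.2.1 + p.2.2 ∧
        -3*(p.1^2 + p.2.1^2 + p.2.2^2) = t ∧
        -3*(p.1*p.2.1 + p.1*p.2.2 + p.2.1*p.2.2) = u}.ncard ≤ 12 := by
  classical
  set e2 : K := -u / 3 with he2
  set v : K := -(t + 2*u) / 3 with hv
  set q1 : K[X] := X^2 - C v with hq1
  set q2 : K → K[X] := fun s => X^3 + C (-s) * X^2 + C e2 * X + C (-s) with hq2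
  set q3 : K → K → K[X] := fun s a => X^2 + C (a - s) * X + C (e2 - a*(s-a)) with hq3
  have hc1 : q1.coeff 2 = 1 := by simp [hq1, coeff_X_pow, coeff_C]
  have hc2 : ∀ s, (q2 s).coeff 3 = 1 := by intro s; simp [hq2, coeff_X_pow, coeff_C]
  have hc3 : ∀ s a, (q3 s a).coeff 2 = 1 := by intro s a; simp [hq3, coeff_X_pow, coeff_C]
  have hn1 : q1 ≠ 0 := fun h => by simp [h] at hc1
  have hn2 : ∀ s, q2 s ≠ 0 := fun s h => by have := hc2 s; simp [h] at this
  have hn3 : ∀ s a, q3 s a ≠ 0 := fun s a h => by have := hc3 s a; simp [h] at this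
  have hd1 : q1.natDegree ≤ 2 := by
    rw [hq1]; compute_degree
  have hd2 : ∀ s, (q2 s).natDegree ≤ 3 := by
    intro s; rw [hq2]
    show (X^3 + C (-s) * X^2 + C e2 * X + C (-s) : K[X]).natDegree ≤ 3
    compute_degree
  have hd3 : ∀ s a, (q3 s a).natDegree ≤ 2 := by
    intro s a; rw [hq3]
    show (X^2 + C (a - s) * X + C (e2 - a*(s-a)) : K[X]).natDegree ≤ 2
    compute_degree
  set F : Finset (K × K × K) := (q1.roots.toFinset).biUnion (fun s =>
      ((q2 s).roots.toFinset).biUnion (fun a =>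
        ((q3 s a).roots.toFinset).image (fun b => (a, b, s - a - b)))) with hF
  have hsub : {p : K × K × K | p.1 * p.2.1 * p.2.2 = p.1 + p.2.1 + p.2.2 ∧
        -3*(p.1^2 + p.2.1^2 + p.2.2^2) = t ∧
        -3*(p.1*p.2.1 + p.1*p.2.2 + p.2.1*p.2.2) = u} ⊆ ↑F := by
    rintro ⟨a, b, c⟩ ⟨h1, h2, h3⟩
    simp only [Set.mem_setOf_eq] at h1 h2 h3
    have hE2 : a*b + a*c + b*c = e2 := by
      rw [he2]; field_simp; linear_combination -h3
    have hV : (a + b + c)^2 = v := by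
      rw [hv]; field_simp; linear_combination -h2 - 2*h3
    have hs1 : a + b + c ∈ q1.roots.toFinset := by
      rw [Multiset.mem_toFinset, mem_roots hn1]
      simp only [IsRoot, hq1, eval_sub, eval_pow, eval_X, eval_C]
      linear_combination hV
    have hs2 : a ∈ (q2 (a + b + c)).roots.toFinset := by
      rw [Multiset.mem_toFinset, mem_roots (hn2 _)]
      simp only [IsRoot, hq2, eval_add, eval_mul, eval_pow, eval_X, eval_C, eval_neg]
      linear_combination h1 - a * hE2
    have hs3 : b ∈ (q3 (a + b + c) a).roots.toFinset := by
      rw [Multiset.mem_toFinset, mem_roots (hn3 _ _)]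
      simp only [IsRoot, hq3, eval_add, eval_sub, eval_mul, eval_pow, eval_X, eval_C]
      linear_combination -hE2
    rw [Finset.mem_coe, hF]
    refine Finset.mem_biUnion.2 ⟨a + b + c, hs1, Finset.mem_biUnion.2 ⟨a, hs2,
      Finset.mem_image.2 ⟨b, hs3, ?_⟩⟩⟩
    simp only [Prod.mk.injEq]
    exact ⟨trivial, trivial, by ring⟩
  have hcard : F.card ≤ 12 := by
    have h1 : q1.roots.toFinset.card ≤ 2 :=
      le_trans (le_trans (Multiset.toFinset_card_le _) (card_roots' q1)) hd1
    calc F.card ≤ q1.roots.toFinset.card * 6 := by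
          apply Finset.card_biUnion_le_card_mul
          intro s _
          have h2 : (q2 s).roots.toFinset.card ≤ 3 :=
            le_trans (le_trans (Multiset.toFinset_card_le _) (card_roots' _)) (hd2 s)
          calc _ ≤ (q2 s).roots.toFinset.card * 2 := by
                apply Finset.card_biUnion_le_card_mul
                intro a _
                exact le_trans Finset.card_image_le
                  (le_trans (le_trans (Multiset.toFinset_card_le _) (card_roots' _)) (hd3 s a))
            _ ≤ 3 * 2 := Nat.mul_le_mul_right 2 h2
            _ = 6 := rfl
      _ ≤ 2 * 6 := Nat.mul_le_mul_right 6 h1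
      _ = 12 := rfl
  refine ⟨Set.Finite.subset F.finite_toSet hsub, ?_⟩
  calc _ ≤ (↑F : Set (K × K × K)).ncard := Set.ncard_le_ncard hsub F.finite_toSet
    _ = F.card := Set.ncard_coe_finset F
    _ ≤ 12 := hcard
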